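/- Let φ : ℝᴺ → ℝᴺ be a bijection with φ(0) = 0 such that for some K ≥ 1, (1/K)·‖x−y‖ ≤ ‖φ(x)−φ(y)‖ ≤ K·‖x−y‖ for all x,y ∈ ℝᴺ. Then there exist a sequence (t_j) of positive real numbers with t_j → 0 and a bijection dφ : ℝᴺ → ℝᴺ with dφ(0) = 0 satisfying (1/K)·‖u−v‖ ≤ ‖dφ(u)−dφ(v)‖ ≤ K·‖u−v‖ for all u,v ∈ ℝᴺ, such that the maps v ↦ φ(t_j·v)/t_j converge to dφ uniformly on every compact subset of ℝᴺ, and the maps v ↦ φ⁻¹(t_j·v)/t_j converge to dφ⁻¹ uniformly on every compact subset of ℝᴺ. -/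

import Mathlib

open Filter Function Metric Topology
open Filter Function Metric Topology

/-- bi-Lipschitz predicate used in the statement. -/
def BlowupBL {E : Type*} [NormedAddCommGroup E] (K : ℝ) (h : E → E) : Prop :=
  ∀ x y, (1 / K) * ‖x - y‖ ≤ ‖h x - h y‖ ∧ ‖h x - h y‖ ≤ K * ‖x - y‖

lemma blowup_aux1 {K a b : ℝ} (hK : 0 < K) (h : 1/K * a ≤ b) : a ≤ K * b := by
  have := mul_le_mul_of_nonneg_left h hK.le
  rwa [← mul_assoc, mul_one_div, div_self hK.ne', one_mul] at this

lemma blowup_aux2 {K a b : ℝ} (hK : 0 < K) (h : a ≤ K * b) : 1/K * a ≤ b := by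
  have := mul_le_mul_of_nonneg_left h (by positivity : (0:ℝ) ≤ 1/K)
  rwa [← mul_assoc, one_div_mul_cancel hK.ne', one_mul] at this

lemma blowup_inv_BL {E : Type*} [NormedAddCommGroup E] {K : ℝ} (hK : 0 < K)
    {φ : E → E} (hbij : Function.Bijective φ) (h : BlowupBL K φ) :
    BlowupBL K (Function.invFun φ) := by
  intro x y
  have hr : ∀ z, φ (Function.invFun φ z) = z := fun z => Function.invFun_eq (hbij.2 z)
  obtain ⟨h1, h2⟩ := h (Function.invFun φ x) (Function.invFun φ y)
  rw [hr, hr] at h1 h2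
  exact ⟨blowup_aux2 hK h2, blowup_aux1 hK h1⟩

lemma blowup_rescale_BL {E : Type*} [NormedAddCommGroup E] [NormedSpace ℝ E]
    {K : ℝ} {φ : E → E} (h : BlowupBL K φ) {t : ℝ} (ht : 0 < t) :
    BlowupBL K (fun v => t⁻¹ • φ (t • v)) := by
  intro u v
  have hn : ‖t⁻¹ • φ (t • u) - t⁻¹ • φ (t • v)‖ = t⁻¹ * ‖φ (t • u) - φ (t • v)‖ := by
    rw [← smul_sub, norm_smul, Real.norm_eq_abs, abs_of_pos (by positivity)]
  have hn2 : ‖t • u - t • v‖ = t * ‖u - v‖ := by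
    rw [← smul_sub, norm_smul, Real.norm_eq_abs, abs_of_pos ht]
  obtain ⟨h1, h2⟩ := h (t • u) (t • v)
  rw [hn2] at h1 h2
  constructor
  · rw [hn]
    calc (1/K) * ‖u - v‖ = t⁻¹ * ((1/K) * (t * ‖u - v‖)) := by
          field_simp
      _ ≤ t⁻¹ * ‖φ (t • u) - φ (t • v)‖ := by
          exact mul_le_mul_of_nonneg_left h1 (by positivity)
  · rw [hn]
    calc t⁻¹ * ‖φ (t • u) - φ (t • v)‖ ≤ t⁻¹ * (K * (t * ‖u - v‖)) :=
          mul_le_mul_of_nonneg_left h2 (by positivity)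
      _ = K * ‖u - v‖ := by field_simp

lemma blowup_lipschitz {E : Type*} [NormedAddCommGroup E] {K : ℝ} (hK : 1 ≤ K)
    {φ : E → E} (h : BlowupBL K φ) : LipschitzWith K.toNNReal φ :=
  LipschitzWith.of_dist_le_mul fun x y => by
    rw [dist_eq_norm, dist_eq_norm, Real.coe_toNNReal K (by linarith)]
    exact (h x y).2

open scoped NNReal

lemma blowup_S_isCompact {E : Type*} [NormedAddCommGroup E] [NormedSpace ℝ E] [ProperSpace E]
    (c : ℝ≥0) :
    IsCompact {h : C(E, E) | LipschitzWith c h ∧ h 0 = 0} := by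
  apply ArzelaAscoli.isCompact_of_equicontinuous
  · have himg : ContinuousMap.toFun '' {h : C(E, E) | LipschitzWith c h ∧ h 0 = 0} =
        {f : E → E | LipschitzWith c f ∧ f 0 = 0} := by
      ext f
      constructor
      · rintro ⟨g, hg, rfl⟩; exact hg
      · rintro ⟨h1, h2⟩; exact ⟨⟨f, h1.continuous⟩, ⟨h1, h2⟩, rfl⟩
    rw [himg]
    have hclosed : IsClosed {f : E → E | LipschitzWith c f ∧ f 0 = 0} :=
      (isClosed_setOf_lipschitzWith c).inter
        (isClosed_singleton.preimage (continuous_apply 0))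
    have hsub : {f : E → E | LipschitzWith c f ∧ f 0 = 0} ⊆
        Set.pi Set.univ (fun v => closedBall (0 : E) ((c : ℝ) * ‖v‖)) := by
      rintro f ⟨h1, h2⟩ v -
      rw [Metric.mem_closedBall]
      calc dist (f v) 0 = dist (f v) (f 0) := by rw [h2]
        _ ≤ c * dist v 0 := h1.dist_le_mul v 0
        _ = c * ‖v‖ := by rw [dist_zero_right]
    exact IsCompact.of_isClosed_subset
      (isCompact_univ_pi fun v => isCompact_closedBall _ _) hclosed hsub
  · exact equicontinuous_of_continuity_modulus (fun t => (c : ℝ) * t)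
      ((continuous_const.mul continuous_id).tendsto' 0 0 (by simp))
      _ (fun x y i => i.2.1.dist_le_mul x y)

theorem blowup_limit_exists {N : ℕ}
    (φ : EuclideanSpace ℝ (Fin N) → EuclideanSpace ℝ (Fin N))
    (hbij : Function.Bijective φ) (h0 : φ 0 = 0) (K : ℝ) (hK : 1 ≤ K)
    (hbl : ∀ x y, (1 / K) * ‖x - y‖ ≤ ‖φ x - φ y‖ ∧ ‖φ x - φ y‖ ≤ K * ‖x - y‖) :
    ∃ t : ℕ → ℝ, (∀ j, 0 < t j) ∧ Tendsto t atTop (nhds 0) ∧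
      ∃ dφ : EuclideanSpace ℝ (Fin N) → EuclideanSpace ℝ (Fin N),
        Function.Bijective dφ ∧ dφ 0 = 0 ∧
        (∀ u v, (1 / K) * ‖u - v‖ ≤ ‖dφ u - dφ v‖ ∧ ‖dφ u - dφ v‖ ≤ K * ‖u - v‖) ∧
        (∀ F : Set (EuclideanSpace ℝ (Fin N)), IsCompact F →
          TendstoUniformlyOn (fun j v => (t j)⁻¹ • φ (t j • v)) dφ atTop F) ∧
        (∀ F : Set (EuclideanSpace ℝ (Fin N)), IsCompact F →
          TendstoUniformlyOn (fun j v => (t j)⁻¹ • (Function.invFun φ) (t j • v))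
            (Function.invFun dφ) atTop F) := by
  have hK0 : (0:ℝ) < K := lt_of_lt_of_le one_pos hK
  have hBL : BlowupBL K φ := hbl
  set ψ := Function.invFun φ with hψdef
  have hψφ : ∀ x, ψ (φ x) = x := fun x => Function.leftInverse_invFun hbij.1 x
  have hφψ : ∀ x, φ (ψ x) = x := fun x => Function.invFun_eq (hbij.2 x)
  have hψ0 : ψ 0 = 0 := by rw [← h0, hψφ, h0]
  have hψBL : BlowupBL K ψ := blowup_inv_BL hK0 hbij hBL
  have hφlip := blowup_lipschitz hK hBL
  have hψlip := blowup_lipschitz hK hψBL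
  set t0 : ℕ → ℝ := fun n => ((n : ℝ) + 1)⁻¹ with ht0
  have ht0pos : ∀ n, 0 < t0 n := fun n => by positivity
  set fC : ℕ → C(EuclideanSpace ℝ (Fin N), EuclideanSpace ℝ (Fin N)) := fun n =>
    ⟨fun v => (t0 n)⁻¹ • φ (t0 n • v),
      (hφlip.continuous.comp (continuous_id.const_smul (t0 n))).const_smul (t0 n)⁻¹⟩ with hfC
  set gC : ℕ → C(EuclideanSpace ℝ (Fin N), EuclideanSpace ℝ (Fin N)) := fun n =>
    ⟨fun v => (t0 n)⁻¹ • ψ (t0 n • v),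
      (hψlip.continuous.comp (continuous_id.const_smul (t0 n))).const_smul (t0 n)⁻¹⟩ with hgC
  have hfBL : ∀ n, BlowupBL K (fC n) := fun n => blowup_rescale_BL hBL (ht0pos n)
  have hgBL : ∀ n, BlowupBL K (gC n) := fun n => blowup_rescale_BL hψBL (ht0pos n)
  have hf0 : ∀ n, fC n 0 = 0 := fun n => by
    simp only [hfC, ContinuousMap.coe_mk, smul_zero, h0]
  have hg0 : ∀ n, gC n 0 = 0 := fun n => by
    simp only [hgC, ContinuousMap.coe_mk, smul_zero, hψ0]
  set S : Set C(EuclideanSpace ℝ (Fin N), EuclideanSpace ℝ (Fin N)) :=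
    {h | LipschitzWith K.toNNReal h ∧ h 0 = 0} with hS
  have hfS : ∀ n, fC n ∈ S := fun n => ⟨blowup_lipschitz hK (hfBL n), hf0 n⟩
  have hgS : ∀ n, gC n ∈ S := fun n => ⟨blowup_lipschitz hK (hgBL n), hg0 n⟩
  have hScomp : IsCompact S := blowup_S_isCompact K.toNNReal
  have hseq : IsSeqCompact (S ×ˢ S) := (hScomp.prod hScomp).isSeqCompact
  obtain ⟨q, hqS, σ, hσ, hconv⟩ :=
    hseq (x := fun n => (fC n, gC n)) (fun n => Set.mem_prod.2 ⟨hfS n, hgS n⟩)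
  rw [Set.mem_prod] at hqS
  have hfLim : Tendsto (fun n => fC (σ n)) atTop (𝓝 q.1) := (continuous_fst.tendsto q).comp hconv
  have hgLim : Tendsto (fun n => gC (σ n)) atTop (𝓝 q.2) := (continuous_snd.tendsto q).comp hconv
  have hfpt : ∀ v, Tendsto (fun n => fC (σ n) v) atTop (𝓝 (q.1 v)) :=
    fun v => ((continuous_eval_const v).tendsto q.1).comp hfLim
  have hgpt : ∀ v, Tendsto (fun n => gC (σ n) v) atTop (𝓝 (q.2 v)) :=
    fun v => ((continuous_eval_const v).tendsto q.2).comp hgLim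
  have hdBL : BlowupBL K (⇑q.1) := by
    intro u v
    have h1 : Tendsto (fun n => ‖fC (σ n) u - fC (σ n) v‖) atTop (𝓝 ‖q.1 u - q.1 v‖) :=
      ((hfpt u).sub (hfpt v)).norm
    exact ⟨ge_of_tendsto h1 (Eventually.of_forall fun n => (hfBL (σ n) u v).1),
      le_of_tendsto h1 (Eventually.of_forall fun n => (hfBL (σ n) u v).2)⟩
  have hgf : ∀ n v, gC n (fC n v) = v := by
    intro n v
    have ht := (ht0pos n).ne'
    simp only [hfC, hgC, ContinuousMap.coe_mk]
    rw [smul_inv_smul₀ ht, hψφ, inv_smul_smul₀ ht]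
  have hfg : ∀ n v, fC n (gC n v) = v := by
    intro n v
    have ht := (ht0pos n).ne'
    simp only [hfC, hgC, ContinuousMap.coe_mk]
    rw [smul_inv_smul₀ ht, hφψ, inv_smul_smul₀ ht]
  have hcomp : ∀ (F G : ℕ → C(EuclideanSpace ℝ (Fin N), EuclideanSpace ℝ (Fin N)))
      (Fl Gl : C(EuclideanSpace ℝ (Fin N), EuclideanSpace ℝ (Fin N))),
      (∀ n v, G n (F n v) = v) →
      (∀ n, LipschitzWith K.toNNReal (G n)) →
      (∀ v, Tendsto (fun n => F n v) atTop (𝓝 (Fl v))) →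
      (∀ v, Tendsto (fun n => G n v) atTop (𝓝 (Gl v))) →
      ∀ v, Gl (Fl v) = v := by
    intro F G Fl Gl hid hGlip hFpt hGpt v
    have key : Tendsto (fun n => G n (F n v)) atTop (𝓝 (Gl (Fl v))) := by
      rw [tendsto_iff_dist_tendsto_zero]
      have hb : ∀ n, dist (G n (F n v)) (Gl (Fl v)) ≤
          K * dist (F n v) (Fl v) + dist (G n (Fl v)) (Gl (Fl v)) := by
        intro n
        calc dist (G n (F n v)) (Gl (Fl v))
            ≤ dist (G n (F n v)) (G n (Fl v)) + dist (G n (Fl v)) (Gl (Fl v)) :=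
              dist_triangle _ _ _
          _ ≤ K * dist (F n v) (Fl v) + dist (G n (Fl v)) (Gl (Fl v)) := by
              have h := (hGlip n).dist_le_mul (F n v) (Fl v)
              rw [Real.coe_toNNReal K (by linarith)] at h
              linarith
      have hz : Tendsto (fun n => K * dist (F n v) (Fl v) +
          dist (G n (Fl v)) (Gl (Fl v))) atTop (𝓝 0) := by
        have h1 : Tendsto (fun n => dist (F n v) (Fl v)) atTop (𝓝 0) :=
          tendsto_iff_dist_tendsto_zero.1 (hFpt v)
        have h2 : Tendsto (fun n => dist (G n (Fl v)) (Gl (Fl v))) atTop (𝓝 0) :=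
          tendsto_iff_dist_tendsto_zero.1 (hGpt (Fl v))
        simpa using (h1.const_mul K).add h2
      exact squeeze_zero (fun n => dist_nonneg) hb hz
    have hcv : Tendsto (fun _ : ℕ => v) atTop (𝓝 (Gl (Fl v))) := by
      simpa [hid] using key
    exact (tendsto_nhds_unique tendsto_const_nhds hcv).symm
  have hgfL : ∀ v, q.2 (q.1 v) = v :=
    hcomp (fun n => fC (σ n)) (fun n => gC (σ n)) q.1 q.2
      (fun n v => hgf (σ n) v) (fun n => (hgS (σ n)).1) hfpt hgpt
  have hfgL : ∀ v, q.1 (q.2 v) = v :=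
    hcomp (fun n => gC (σ n)) (fun n => fC (σ n)) q.2 q.1
      (fun n v => hfg (σ n) v) (fun n => (hfS (σ n)).1) hgpt hfpt
  have hdbij : Function.Bijective (⇑q.1) :=
    Function.bijective_iff_has_inverse.2 ⟨⇑q.2, hgfL, hfgL⟩
  have hinv : Function.invFun (⇑q.1) = ⇑q.2 := by
    funext x
    have h1 : q.1 (Function.invFun (⇑q.1) x) = x := Function.invFun_eq (hdbij.2 x)
    exact hdbij.1 (h1.trans (hfgL x).symm)
  rw [ContinuousMap.tendsto_iff_forall_isCompact_tendstoUniformlyOn] at hfLim hgLim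
  refine ⟨fun j => t0 (σ j), fun j => ht0pos _, ?_, ⇑q.1, hdbij, hqS.1.2, hdBL, ?_, ?_⟩
  · have h : Tendsto t0 atTop (𝓝 0) := by
      simpa [ht0, one_div] using tendsto_one_div_add_atTop_nhds_zero_nat (𝕜 := ℝ)
    exact h.comp hσ.tendsto_atTop
  · exact fun F hF => hfLim F hF
  · intro F hF
    rw [hinv]
    exact hgLim F hF
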